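/- Let G^{A,B} be a biconed graph and T any spanning tree of G^{A,B}. Then every edge of T that does not belong to T_0 is internally passive in T. -/

import Mathlib

/-!
Formalization scaffold for "h-vectors of graphic matroids of biconed graphs".

A graph `G` (loops and parallel edges allowed) with vertex set `A ∪ B` is
modelled by an abstract finite edge type `E` with an endpoint map
`ends : E → Sym2 (Fin m ⊕ₗ Fin n)`, where `A = Fin m = {1,…,m}`,
`Ā = B \ A = Fin n = {1̄,…,n̄}` and the finset `S ⊆ Fin m` records `A ∩ B`
(so `B = S ∪ Ā`).  The biconing `G^{A,B}` adds the two vertices `0` and `0̄`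
and the edges `00̄`, `0a (a ∈ A)` and `0̄b (b ∈ B)`.
-/

namespace BiconedPaper

noncomputable section
open scoped Classical

/-! ### Walks in multigraphs presented by an endpoint map -/

/-- A walk in the multigraph with edge set `ε` and endpoint map `ends`. -/
inductive MWalk {ε ν : Type} (ends : ε → Sym2 ν) : ν → ν → Type
  | nil (u : ν) : MWalk ends u u
  | cons {u w : ν} (e : ε) (v : ν) (h : ends e = s(u, v)) (p : MWalk ends v w) :
      MWalk ends u w

namespace MWalk

variable {ε ν : Type} {ends : ε → Sym2 ν}

/-- The list of edges traversed by a walk. -/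
def edges : ∀ {u v : ν}, MWalk ends u v → List ε
  | _, _, nil _ => []
  | _, _, cons e _ _ p => e :: p.edges

/-- The list of vertices visited by a walk. -/
def support : ∀ {u v : ν}, MWalk ends u v → List ν
  | u, _, nil _ => [u]
  | u, _, cons _ _ _ p => u :: p.support

/-- A walk is a path if it visits no vertex twice. -/
def IsPath {u v : ν} (p : MWalk ends u v) : Prop := p.support.Nodup

/-- All edges of the walk belong to the edge set `F`. -/
def edgesIn {u v : ν} (p : MWalk ends u v) (F : Finset ε) : Prop :=
  ∀ e ∈ p.edges, e ∈ F

/-- The number of "bridging" edges traversed by a walk, i.e. steps whose two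
endpoints lie on different sides according to `sideF`. -/
def bridgeCount (sideF : ν → Bool) : ∀ {u v : ν}, MWalk ends u v → ℕ
  | _, _, nil _ => 0
  | u, _, cons _ v' _ p => (if sideF u = sideF v' then 0 else 1) + p.bridgeCount sideF

end MWalk

/-- `u` and `v` are joined by a walk all of whose edges lie in `F`. -/
def Reachable {ε ν : Type} (ends : ε → Sym2 ν) (F : Finset ε) (u v : ν) : Prop :=
  ∃ p : MWalk ends u v, p.edgesIn F

/-- An edge set is acyclic (a forest) iff removing any one of its edges
disconnects the endpoints of that edge.  (In particular no loops and no
parallel pairs.) -/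
def IsAcyclic {ε ν : Type} [DecidableEq ε] (ends : ε → Sym2 ν) (F : Finset ε) : Prop :=
  ∀ e ∈ F, ∀ u v : ν, ends e = s(u, v) → ¬ Reachable ends (F.erase e) u v

/-- A spanning tree: an acyclic edge set connecting every pair of vertices. -/
def IsSpanningTree {ε ν : Type} [DecidableEq ε] (ends : ε → Sym2 ν) (T : Finset ε) : Prop :=
  IsAcyclic ends T ∧ ∀ u v : ν, Reachable ends T u v

/-! ### Biconed graphs -/

/-- The data of a biconed graph `G^{A,B}`:  the graph `G` has vertex set
`A ∪ B` with `A = Fin m`, `Ā = B \ A = Fin n`, `A ∩ B = S`, and abstract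
edge set `E` (so loops and parallel edges are allowed). -/
structure BiconedGraph where
  m : ℕ
  n : ℕ
  E : Type
  fintypeE : Fintype E
  decEqE : DecidableEq E
  ends : E → Sym2 (Fin m ⊕ₗ Fin n)
  S : Finset (Fin m)

namespace BiconedGraph

variable (P : BiconedGraph)

instance : Fintype P.E := P.fintypeE
instance : DecidableEq P.E := P.decEqE

/-- The vertices of `G`, linearly ordered `1 < ⋯ < m < 1̄ < ⋯ < n̄`. -/
abbrev VG := Fin P.m ⊕ₗ Fin P.n

/-- The vertices of `G^{A,B}_red`:  `⊥` is the vertex `0̄`, ordered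
`0̄ < 1 < ⋯ < m < 1̄ < ⋯ < n̄`. -/
abbrev Vred := WithBot P.VG

/-- The vertices of `G^{A,B}`: `⊥` is `0`, ordered `0 < 0̄ < 1 < ⋯ < n̄`. -/
abbrev W := WithBot P.Vred

/-- The vertex `a ∈ A`. -/
def aVert (a : Fin P.m) : P.VG := toLex (Sum.inl a)
/-- The vertex `b ∈ Ā`. -/
def bVert (b : Fin P.n) : P.VG := toLex (Sum.inr b)
/-- Inclusion of the vertices of `G` into those of `G^{A,B}_red`. -/
def liftV (x : P.VG) : P.Vred := (x : WithBot P.VG)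
/-- Inclusion of the vertices of `G^{A,B}_red` into those of `G^{A,B}`. -/
def liftW (x : P.Vred) : P.W := (x : WithBot P.Vred)

/-- The edges of the biconed graph `G^{A,B}`:  the edge `00̄`, the coning
edges `0a (a ∈ A)`, `0̄b (b ∈ Ā)`, `0̄a (a ∈ A ∩ B)`, and the edges of `G`. -/
abbrev EB := Unit ⊕ (Fin P.m ⊕ (Fin P.n ⊕ ({a : Fin P.m // a ∈ P.S} ⊕ P.E)))

/-- The edge `00̄`. -/
abbrev e00 : P.EB := Sum.inl ()
/-- The coning edge `0a`, `a ∈ A`. -/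
abbrev eA (a : Fin P.m) : P.EB := Sum.inr (Sum.inl a)
/-- The coning edge `0̄b`, `b ∈ Ā`. -/
abbrev eB (b : Fin P.n) : P.EB := Sum.inr (Sum.inr (Sum.inl b))
/-- The coning edge `0̄a`, `a ∈ A ∩ B`. -/
abbrev eS (a : {a : Fin P.m // a ∈ P.S}) : P.EB := Sum.inr (Sum.inr (Sum.inr (Sum.inl a)))
/-- An original edge of `G`. -/
abbrev eG (e : P.E) : P.EB := Sum.inr (Sum.inr (Sum.inr (Sum.inr e)))

/-- The endpoint map of `G^{A,B}`. -/
def endsB : P.EB → Sym2 P.W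
  | Sum.inl _ => s((⊥ : P.W), P.liftW ⊥)
  | Sum.inr (Sum.inl a) => s((⊥ : P.W), P.liftW (P.liftV (P.aVert a)))
  | Sum.inr (Sum.inr (Sum.inl b)) => s(P.liftW ⊥, P.liftW (P.liftV (P.bVert b)))
  | Sum.inr (Sum.inr (Sum.inr (Sum.inl a))) => s(P.liftW ⊥, P.liftW (P.liftV (P.aVert a.1)))
  | Sum.inr (Sum.inr (Sum.inr (Sum.inr e))) => (P.ends e).map fun x => P.liftW (P.liftV x)

/-- The spanning tree `T₀`, consisting of `00̄`, the edges `0a (a ∈ A)` and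
the edges `0̄b (b ∈ Ā)`. -/
def T0 : Finset P.EB :=
  Finset.univ.filter fun e => match e with
    | Sum.inl _ => True
    | Sum.inr (Sum.inl _) => True
    | Sum.inr (Sum.inr (Sum.inl _)) => True
    | _ => False

/-- The edges of `G^{A,B}_red` (delete the edges of `T₀` and the vertex `0`):
the edges `0̄a (a ∈ A ∩ B)` together with the edges of `G`. -/
abbrev Ered := {a : Fin P.m // a ∈ P.S} ⊕ P.E

/-- The endpoint map of `G^{A,B}_red`; `⊥` is the vertex `0̄`. -/
def endsRed : P.Ered → Sym2 P.Vred
  | Sum.inl a => s((⊥ : P.Vred), P.liftV (P.aVert a.1))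
  | Sum.inr e => (P.ends e).map P.liftV

/-- Inclusion of the edges of `G^{A,B}_red` into those of `G^{A,B}`. -/
def redToEB : P.Ered → P.EB
  | Sum.inl a => P.eS a
  | Sum.inr e => P.eG e

/-- The edge set `T \ T₀` of `T`, viewed inside `G^{A,B}_red`. -/
def redOf (T : Finset P.EB) : Finset P.Ered :=
  Finset.univ.filter fun e => P.redToEB e ∈ T

/-- `true` on the vertices of `A`, `false` on the vertices of `Ā ∪ {0̄}`. -/
def side : P.Vred → Bool :=
  WithBot.recBotCoe false fun x => Sum.elim (fun _ => true) (fun _ => false) (ofLex x)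

/-- The vertex lies in `A`. -/
def InA (v : P.Vred) : Prop := ∃ a : Fin P.m, v = P.liftV (P.aVert a)

/-- An edge of `G^{A,B}_red` is bridging if it joins a vertex of `A` to a
vertex of `Ā ∪ {0̄}`. -/
def BridgingE (e : P.Ered) : Prop :=
  ∃ u v : P.Vred, P.endsRed e = s(u, v) ∧ P.side u ≠ P.side v

/-! ### 2-edge-rooted forests -/

/-- The underlying edge set `F` of the multiset of edges given by the
multiplicity function `mult` (an edge `e` carries `mult e - 1` edge roots). -/
def mSupport (mult : P.Ered → ℕ) : Finset P.Ered :=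
  Finset.univ.filter fun e => mult e ≠ 0

/-- The degree of the multiset of edges given by `mult`. -/
def deg (mult : P.Ered → ℕ) : ℕ := ∑ e : P.Ered, mult e

/-- Edge `e` meets the connected component of `v` in the edge set `F`. -/
def Touches (F : Finset P.Ered) (v : P.Vred) (e : P.Ered) : Prop :=
  ∃ u : P.Vred, u ∈ P.endsRed e ∧ Reachable P.endsRed F v u

/-- The total number of edge roots in the component of `v`. -/
def compEdgeRoots (mult : P.Ered → ℕ) (v : P.Vred) : ℕ :=
  ∑ e ∈ P.mSupport mult, if P.Touches (P.mSupport mult) v e then mult e - 1 else 0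

/-- The component of `v` is `compCount`-edge-rooted:  the number of its edge
roots, plus `1` if it contains the vertex `0̄`. -/
def compCount (mult : P.Ered → ℕ) (v : P.Vred) : ℕ :=
  P.compEdgeRoots mult v +
    if Reachable P.endsRed (P.mSupport mult) v (⊥ : P.Vred) then 1 else 0

/-- Condition (C3) for the `2`-edge-rooted component of `v`:  the unique
shortest path containing both edge roots (resp. the vertex `0̄` and the edge
root, if the component contains `0̄`) has an odd number of bridging edges.
The shortest path containing two edges is the unique path whose first and
last edges are the two rooted edges; if the two edge roots lie on one common
edge (`mult e = 3`) the path is that single edge. -/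
def C3At (mult : P.Ered → ℕ) (v : P.Vred) : Prop :=
  (Reachable P.endsRed (P.mSupport mult) v (⊥ : P.Vred) →
    ∃ (x : P.Vred) (p : MWalk P.endsRed (⊥ : P.Vred) x),
      p.IsPath ∧ p.edgesIn (P.mSupport mult) ∧
      (∃ e, p.edges.getLast? = some e ∧ 2 ≤ mult e) ∧
      Odd (p.bridgeCount P.side)) ∧
  (¬ Reachable P.endsRed (P.mSupport mult) v (⊥ : P.Vred) →
    ∃ (x y : P.Vred) (p : MWalk P.endsRed x y),
      p.IsPath ∧ p.edgesIn (P.mSupport mult) ∧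
      Reachable P.endsRed (P.mSupport mult) v x ∧
      (∃ e, p.edges.head? = some e ∧ 2 ≤ mult e) ∧
      (∃ e, p.edges.getLast? = some e ∧ 2 ≤ mult e) ∧
      (∀ e, p.edges = [e] → mult e = 3) ∧
      Odd (p.bridgeCount P.side))

/-- `mult : Ered → ℕ` is (the multiplicity function of) a 2-edge-rooted
forest of `G^{A,B}_red`:
(C0) its support is a spanning forest;
(C1) at most one component is `2`-edge-rooted;
(C2) every other component is `0`- or `1`-edge-rooted;
(C3) the parity condition on the path joining the two roots. -/
def Is2ERF (mult : P.Ered → ℕ) : Prop :=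
  IsAcyclic P.endsRed (P.mSupport mult) ∧
  (∀ v : P.Vred, P.compCount mult v ≤ 2) ∧
  (∀ u v : P.Vred, P.compCount mult u = 2 → P.compCount mult v = 2 →
    Reachable P.endsRed (P.mSupport mult) u v) ∧
  (∀ v : P.Vred, P.compCount mult v = 2 → P.C3At mult v)

/-! ### Birooted forests -/

/-- `(F, R)` is a birooted forest of `G^{A,B}_red`:  `F` is a spanning forest,
the root set `R` contains `0̄`, every component of `F` contains at least one
root, no component contains three roots, at most one component contains two
roots, and a component with two roots has one root in `A` and the other in
`Ā ∪ {0̄}`. -/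
def IsBirootedForest (F : Finset P.Ered) (R : Set P.Vred) : Prop :=
  IsAcyclic P.endsRed F ∧
  (⊥ : P.Vred) ∈ R ∧
  (∀ v : P.Vred, ∃ r ∈ R, Reachable P.endsRed F v r) ∧
  (∀ r₁ ∈ R, ∀ r₂ ∈ R, ∀ r₃ ∈ R, r₁ ≠ r₂ → r₁ ≠ r₃ → r₂ ≠ r₃ →
    Reachable P.endsRed F r₁ r₂ → Reachable P.endsRed F r₁ r₃ → False) ∧
  (∀ r₁ ∈ R, ∀ r₂ ∈ R, ∀ r₃ ∈ R, ∀ r₄ ∈ R, r₁ ≠ r₂ → r₃ ≠ r₄ →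
    Reachable P.endsRed F r₁ r₂ → Reachable P.endsRed F r₃ r₄ →
    Reachable P.endsRed F r₁ r₃) ∧
  (∀ r₁ ∈ R, ∀ r₂ ∈ R, r₁ ≠ r₂ → Reachable P.endsRed F r₁ r₂ →
    (P.InA r₁ ∧ ¬ P.InA r₂) ∨ (P.InA r₂ ∧ ¬ P.InA r₁))

/-! ### Internal activity and the edge order -/

/-- `e` is internally passive in the spanning tree `T`:  it can be exchanged
for a strictly smaller edge `f` so that the result is again a spanning tree. -/
def InternallyPassive (ord : LinearOrder P.EB) (T : Finset P.EB) (e : P.EB) : Prop :=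
  e ∈ T ∧ ∃ f : P.EB, ord.lt f e ∧ IsSpanningTree P.endsB (insert f (T.erase e))

/-- `e` is internally active in the spanning tree `T`. -/
def InternallyActive (ord : LinearOrder P.EB) (T : Finset P.EB) (e : P.EB) : Prop :=
  e ∈ T ∧ ¬ ∃ f : P.EB, ord.lt f e ∧ IsSpanningTree P.endsB (insert f (T.erase e))

/-- The number of internally passive edges of `T`. -/
def ipCount (ord : LinearOrder P.EB) (T : Finset P.EB) : ℕ :=
  (T.filter fun e => P.InternallyPassive ord T e).card

/-- The smaller endpoint of an edge of `G^{A,B}`. -/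
def endMin (e : P.EB) : P.W := Sym2.lift ⟨fun a b => a ⊓ b, fun a b => inf_comm a b⟩ (P.endsB e)
/-- The larger endpoint of an edge of `G^{A,B}`. -/
def endMax (e : P.EB) : P.W := Sym2.lift ⟨fun a b => a ⊔ b, fun a b => sup_comm a b⟩ (P.endsB e)

/-- The endpoints of an edge, as an ordered pair in the lexicographic square
of the vertex order `0 < 0̄ < 1 < ⋯ < m < 1̄ < ⋯ < n̄`. -/
def lexEnds (e : P.EB) : P.W ×ₗ P.W := toLex (P.endMin e, P.endMax e)

/-- A linear order on the edges of `G^{A,B}` is admissible if it refines the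
lexicographic order on endpoints (so parallel edges are ordered arbitrarily). -/
def AdmissibleOrder (ord : LinearOrder P.EB) : Prop :=
  ∀ e f : P.EB, P.lexEnds e < P.lexEnds f → ord.lt e f

/-- `v` is a connecting vertex of `T`:  `v ∈ A` and `v` is adjacent to `0` in
`T`, or `v ∈ Ā` and `v` is adjacent to `0̄` in `T`. -/
def ConnVertex (T : Finset P.EB) (v : P.Vred) : Prop :=
  (∃ a : Fin P.m, v = P.liftV (P.aVert a) ∧ P.eA a ∈ T) ∨
  (∃ b : Fin P.n, v = P.liftV (P.bVert b) ∧ P.eB b ∈ T)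

/-- `e` is a connecting edge of `T` (an edge `0a`, `a ∈ A`, or `0̄b`, `b ∈ Ā`)
with connecting vertex `v`. -/
def ConnEdge (T : Finset P.EB) (e : P.EB) (v : P.Vred) : Prop :=
  e ∈ T ∧ ((∃ a : Fin P.m, e = P.eA a ∧ v = P.liftV (P.aVert a)) ∨
           (∃ b : Fin P.n, e = P.eB b ∧ v = P.liftV (P.bVert b)))

/-! ### The h-vector -/

/-- `f_{i-1}`:  the number of acyclic edge sets of cardinality `i` in `G^{A,B}`. -/
def numAcyclic (i : ℕ) : ℕ :=
  Nat.card {F : Finset P.EB // IsAcyclic P.endsB F ∧ F.card = i}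

/-- The rank of the graphic matroid of `G^{A,B}`:  `|V| - 1 = m + n + 1`. -/
def d : ℕ := P.m + P.n + 1

/-- `h` is the h-vector of the graphic matroid of `G^{A,B}`:  it satisfies
`Σ_{i=0}^{d} f_{i-1} (t-1)^{d-i} = Σ_{k=0}^{d} h_k t^{d-k}`. -/
def IsHVector (h : ℕ → ℤ) : Prop :=
  ∑ i ∈ Finset.range (P.d + 1),
      Polynomial.C ((P.numAcyclic i : ℤ)) * (Polynomial.X - 1) ^ (P.d - i)
    = ∑ k ∈ Finset.range (P.d + 1), Polynomial.C (h k) * Polynomial.X ^ (P.d - k)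

end BiconedGraph

/-- `(h 0, …, h d)` is a pure O-sequence:  there is a multicomplex `M` of
multisets on a finite ground set (nonempty, closed under sub-multisets), all
of whose inclusion-maximal members have the same cardinality, whose members
all have cardinality at most `d`, and which has exactly `h i` members of
cardinality `i` for every `i ≤ d`. -/
def IsPureOSeq (d : ℕ) (h : ℕ → ℤ) : Prop :=
  ∃ (N : ℕ) (M : Set (Multiset (Fin N))),
    M.Nonempty ∧
    (∀ s ∈ M, ∀ t : Multiset (Fin N), t ≤ s → t ∈ M) ∧
    (∀ s ∈ M, ∀ t ∈ M, (∀ u ∈ M, s ≤ u → u = s) → (∀ u ∈ M, t ≤ u → u = t) →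
      Multiset.card s = Multiset.card t) ∧
    (∀ s ∈ M, Multiset.card s ≤ d) ∧
    (∀ i ≤ d, (Nat.card {s : Multiset (Fin N) // s ∈ M ∧ Multiset.card s = i} : ℤ) = h i)



/-! ### Auxiliary lemmas for Statement 9 -/

namespace MWalk

variable {ε ν : Type} {ends : ε → Sym2 ν}

/-- Concatenation of walks. -/
def append : ∀ {u v w : ν}, MWalk ends u v → MWalk ends v w → MWalk ends u w
  | _, _, _, .nil _, q => q
  | _, _, _, .cons e v h p, q => .cons e v h (p.append q)

theorem edges_append : ∀ {u v w : ν} (p : MWalk ends u v) (q : MWalk ends v w),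
    (p.append q).edges = p.edges ++ q.edges
  | _, _, _, .nil _, _ => rfl
  | _, _, _, .cons e v h p, q => by
      simp [append, edges, edges_append p q]

/-- Reversal of a walk. -/
def reverse : ∀ {u v : ν}, MWalk ends u v → MWalk ends v u
  | _, _, .nil u => .nil u
  | _, _, .cons e _ h p => p.reverse.append (.cons e _ (h.trans Sym2.eq_swap) (.nil _))

theorem edges_reverse : ∀ {u v : ν} (p : MWalk ends u v),
    p.reverse.edges = p.edges.reverse
  | _, _, .nil _ => rfl
  | _, _, .cons e v h p => by
      simp [reverse, edges_append, edges, edges_reverse p]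

theorem edgesIn_append {u v w : ν} {p : MWalk ends u v} {q : MWalk ends v w}
    {F : Finset ε} (hp : p.edgesIn F) (hq : q.edgesIn F) : (p.append q).edgesIn F := by
  intro e he
  rw [edges_append] at he
  rcases List.mem_append.mp he with h | h
  · exact hp e h
  · exact hq e h

theorem edgesIn_reverse {u v : ν} {p : MWalk ends u v} {F : Finset ε}
    (hp : p.edgesIn F) : p.reverse.edgesIn F := by
  intro e he
  rw [edges_reverse] at he
  exact hp e (List.mem_reverse.mp he)

end MWalk

namespace Reachable

variable {ε ν : Type} {ends : ε → Sym2 ν}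

theorem refl (F : Finset ε) (u : ν) : Reachable ends F u u :=
  ⟨MWalk.nil u, by intro e he; simp [MWalk.edges] at he⟩

theorem trans {F : Finset ε} {u v w : ν} (h₁ : Reachable ends F u v)
    (h₂ : Reachable ends F v w) : Reachable ends F u w := by
  obtain ⟨p, hp⟩ := h₁; obtain ⟨q, hq⟩ := h₂
  exact ⟨p.append q, MWalk.edgesIn_append hp hq⟩

theorem symm {F : Finset ε} {u v : ν} (h : Reachable ends F u v) :
    Reachable ends F v u := by
  obtain ⟨p, hp⟩ := h
  exact ⟨p.reverse, MWalk.edgesIn_reverse hp⟩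

theorem mono {F F' : Finset ε} (hFF : F ⊆ F') {u v : ν}
    (h : Reachable ends F u v) : Reachable ends F' u v := by
  obtain ⟨p, hp⟩ := h
  exact ⟨p, fun e he => hFF (hp e he)⟩

theorem single {F : Finset ε} {e : ε} (he : e ∈ F) {u v : ν}
    (h : ends e = s(u, v)) : Reachable ends F u v :=
  ⟨MWalk.cons e v h (MWalk.nil v), by
    intro f hf
    simp [MWalk.edges] at hf
    subst hf; exact he⟩

theorem cons {F : Finset ε} {e : ε} (he : e ∈ F) {u v w : ν}
    (h : ends e = s(u, v)) (hr : Reachable ends F v w) : Reachable ends F u w :=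
  (single he h).trans hr

end Reachable

section WalkLemmas

variable {ε ν : Type} [DecidableEq ε] {ends : ε → Sym2 ν}

/-- Walking in `T`, one either avoids the edge `e` or first reaches an
endpoint of `e` while avoiding `e`. -/
theorem reach_avoid (e : ε) {u v : ν} (he : ends e = s(u, v)) (T : Finset ε)
    {w z : ν} (p : MWalk ends w z) (hp : p.edgesIn T) :
    Reachable ends (T.erase e) w z ∨ Reachable ends (T.erase e) w u ∨
      Reachable ends (T.erase e) w v := by
  induction p with
  | nil x => exact Or.inl (Reachable.refl _ _)
  | @cons a b e' v' h q ih =>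
    by_cases hee : e' = e
    · subst hee
      rw [he] at h
      rcases Sym2.eq_iff.mp h with ⟨h1, _⟩ | ⟨_, h2⟩
      · exact Or.inr (Or.inl (by rw [h1]; exact Reachable.refl _ _))
      · exact Or.inr (Or.inr (by rw [h2]; exact Reachable.refl _ _))
    · have he' : e' ∈ T.erase e :=
        Finset.mem_erase.mpr ⟨hee, hp e' (by simp [MWalk.edges])⟩
      have hq : q.edgesIn T := fun f hf => hp f (by simp [MWalk.edges, hf])
      rcases ih hq with h1 | h1 | h1
      · exact Or.inl (Reachable.cons he' h h1)
      · exact Or.inr (Or.inl (Reachable.cons he' h h1))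
      · exact Or.inr (Or.inr (Reachable.cons he' h h1))

/-- Reachability after inserting an edge `f`. -/
theorem reach_insert (f : ε) {x y : ν} (hf : ends f = s(x, y)) (S : Finset ε)
    {p q : ν} (w : MWalk ends p q) (hw : w.edgesIn (insert f S)) :
    Reachable ends S p q ∨
      ((Reachable ends S p x ∨ Reachable ends S p y) ∧
       (Reachable ends S q x ∨ Reachable ends S q y)) := by
  induction w with
  | nil x => exact Or.inl (Reachable.refl _ _)
  | @cons a b e' v' h w' ih =>
    have hw' : w'.edgesIn (insert f S) := fun g hg => hw g (by simp [MWalk.edges, hg])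
    by_cases hef : e' = f
    · subst hef
      rw [hf] at h
      have ha : Reachable ends S a x ∨ Reachable ends S a y := by
        rcases Sym2.eq_iff.mp h with ⟨h1, _⟩ | ⟨_, h2⟩
        · exact Or.inl (by rw [h1]; exact Reachable.refl _ _)
        · exact Or.inr (by rw [h2]; exact Reachable.refl _ _)
      have hv' : Reachable ends S v' x ∨ Reachable ends S v' y := by
        rcases Sym2.eq_iff.mp h with ⟨_, h2⟩ | ⟨h1, _⟩
        · exact Or.inr (by rw [h2]; exact Reachable.refl _ _)
        · exact Or.inl (by rw [h1]; exact Reachable.refl _ _)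
      refine Or.inr ⟨ha, ?_⟩
      rcases ih hw' with h1 | ⟨_, h2⟩
      · rcases hv' with h3 | h3
        · exact Or.inl (h1.symm.trans h3)
        · exact Or.inr (h1.symm.trans h3)
      · exact h2
    · have he' : e' ∈ S := by
        rcases Finset.mem_insert.mp (hw e' (by simp [MWalk.edges])) with h1 | h1
        · exact absurd h1 hef
        · exact h1
      rcases ih hw' with h1 | ⟨h2, h3⟩
      · exact Or.inl (Reachable.cons he' h h1)
      · refine Or.inr ⟨?_, h3⟩
        rcases h2 with h2 | h2
        · exact Or.inl ((Reachable.single he' h).trans h2)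
        · exact Or.inr ((Reachable.single he' h).trans h2)

/-- The basis-exchange lemma for spanning trees:  if `f` joins the two
components of `T ∖ e`, then `(T ∖ e) ∪ f` is again a spanning tree. -/
theorem exchange {T : Finset ε} (hT : IsSpanningTree ends T)
    {e : ε} (he : e ∈ T) {u v : ν} (hue : ends e = s(u, v))
    {f : ε} {x y : ν} (hf : ends f = s(x, y))
    (hx : Reachable ends (T.erase e) x u) (hy : Reachable ends (T.erase e) y v) :
    IsSpanningTree ends (insert f (T.erase e)) := by
  obtain ⟨hacyc, hconn⟩ := hT
  set F := T.erase e with hF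
  have huv : ¬ Reachable ends F u v := hacyc e he u v hue
  have hfF : f ∉ F := fun hmem =>
    huv (hx.symm.trans ((Reachable.single hmem hf).trans hy))
  have reach2 : ∀ w : ν, Reachable ends F w u ∨ Reachable ends F w v := by
    intro w
    obtain ⟨p, hp⟩ := hconn w u
    rcases reach_avoid e hue T p hp with h1 | h1 | h1
    · exact Or.inl h1
    · exact Or.inl h1
    · exact Or.inr h1
  have hsub : F ⊆ insert f F := Finset.subset_insert _ _
  have hfmem : f ∈ insert f F := Finset.mem_insert_self _ _
  have reachu : ∀ w : ν, Reachable ends (insert f F) w u := by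
    intro w
    rcases reach2 w with h1 | h1
    · exact h1.mono hsub
    · exact ((h1.trans hy.symm).mono hsub).trans
        (((Reachable.single hfmem hf).symm).trans (hx.mono hsub))
  constructor
  · -- acyclicity
    intro g hg p q hpq hreach
    by_cases hgf : g = f
    · subst hgf
      rw [Finset.erase_insert hfF] at hreach
      have hxy : Reachable ends F x y := by
        rcases Sym2.eq_iff.mp (hf.symm.trans hpq) with ⟨h1, h2⟩ | ⟨h1, h2⟩
        · exact h1 ▸ h2 ▸ hreach
        · exact (h1 ▸ h2 ▸ hreach).symm
      exact huv (hx.symm.trans (hxy.trans hy))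
    · have hgF : g ∈ F := by
        rcases Finset.mem_insert.mp hg with h1 | h1
        · exact absurd h1 hgf
        · exact h1
      have hgT : g ∈ T := Finset.mem_of_mem_erase hgF
      have hacg : ¬ Reachable ends (T.erase g) p q := hacyc g hgT p q hpq
      have hFsub : F.erase g ⊆ T.erase g := by
        intro a ha
        have := Finset.mem_erase.mp ha
        have := Finset.mem_erase.mp this.2
        exact Finset.mem_erase.mpr ⟨(Finset.mem_erase.mp ha).1, this.2⟩
      rw [Finset.erase_insert_of_ne (fun h => hgf h.symm)] at hreach
      obtain ⟨w, hw⟩ := hreach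
      rcases reach_insert f hf (F.erase g) w hw with h1 | ⟨h2, h3⟩
      · exact hacg (h1.mono hFsub)
      · have hFe : F.erase g ⊆ F := Finset.erase_subset _ _
        have hpq' : Reachable ends F p q := Reachable.single hgF hpq
        rcases h2 with h2 | h2 <;> rcases h3 with h3 | h3
        · exact hacg ((h2.trans h3.symm).mono hFsub)
        · exact huv (hx.symm.trans
            (((((h2.mono hFe).symm.trans hpq').trans (h3.mono hFe))).trans hy))
        · exact huv (hx.symm.trans
            (((((h3.mono hFe).symm.trans hpq'.symm).trans (h2.mono hFe))).trans hy))
        · exact hacg ((h2.trans h3.symm).mono hFsub)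
  · -- connectivity
    intro a b
    exact (reachu a).trans (reachu b).symm

end WalkLemmas

namespace BiconedGraph

variable (P : BiconedGraph)

theorem endsB_e00 : P.endsB P.e00 = s((⊥ : P.W), P.liftW ⊥) := rfl

theorem endsB_eA (a : Fin P.m) :
    P.endsB (P.eA a) = s((⊥ : P.W), P.liftW (P.liftV (P.aVert a))) := rfl

theorem endsB_eB (b : Fin P.n) :
    P.endsB (P.eB b) = s(P.liftW ⊥, P.liftW (P.liftV (P.bVert b))) := rfl

theorem endsB_eS (a : {a : Fin P.m // a ∈ P.S}) :
    P.endsB (P.eS a) = s(P.liftW ⊥, P.liftW (P.liftV (P.aVert a.1))) := rfl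

theorem bot_lt_liftW_bot : (⊥ : P.W) < P.liftW ⊥ := WithBot.bot_lt_coe _

theorem bot_lt_liftW_liftV (x : P.VG) : (⊥ : P.W) < P.liftW (P.liftV x) :=
  WithBot.bot_lt_coe _

theorem liftW_bot_lt_liftW_liftV (x : P.VG) : P.liftW ⊥ < P.liftW (P.liftV x) :=
  WithBot.coe_lt_coe.mpr (WithBot.bot_lt_coe _)

theorem endMin_eq (e : P.EB) {a b : P.W} (h : P.endsB e = s(a, b)) :
    P.endMin e = a ⊓ b := by
  rw [endMin, h, Sym2.lift_mk]

theorem lt_inf' {c a b : P.W} (h1 : c < a) (h2 : c < b) : c < a ⊓ b := by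
  rcases le_total a b with h | h
  · rwa [inf_eq_left.mpr h]
  · rwa [inf_eq_right.mpr h]

theorem lexEnds_lt_of_min_lt {e f : P.EB} (h : P.endMin e < P.endMin f) :
    P.lexEnds e < P.lexEnds f :=
  Prod.Lex.lt_iff.mpr (Or.inl h)

end BiconedGraph


/-- If `0` can reach (in `T ∖ e`) the endpoint `x₀` of an original edge
`e = eG e₀` of a spanning tree `T`, then `e` can be exchanged for a strictly
smaller edge. -/
theorem eG_exchange (P : BiconedGraph) (T : Finset P.EB)
    (hT : IsSpanningTree P.endsB T) (e0 : P.E) (heT : P.eG e0 ∈ T)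
    {x0 y0 : P.VG} (h : P.ends e0 = s(x0, y0))
    (h0 : Reachable P.endsB (T.erase (P.eG e0)) (⊥ : P.W)
      (P.liftW (P.liftV x0))) :
    ∃ f : P.EB, P.lexEnds f < P.lexEnds (P.eG e0) ∧
      IsSpanningTree P.endsB (insert f (T.erase (P.eG e0))) := by
  have hue : P.endsB (P.eG e0)
      = s(P.liftW (P.liftV x0), P.liftW (P.liftV y0)) := by
    show (P.ends e0).map _ = _
    rw [h, Sym2.map_pair_eq]
  have hminG : P.endMin (P.eG e0)
      = P.liftW (P.liftV x0) ⊓ P.liftW (P.liftV y0) := P.endMin_eq _ hue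
  obtain a | b := y0
  · -- `y0 = aVert a`:  exchange for the coning edge `0a`
    refine ⟨P.eA a, P.lexEnds_lt_of_min_lt ?_, exchange hT heT hue
      (P.endsB_eA a) h0 (Reachable.refl _ _)⟩
    rw [hminG, P.endMin_eq _ (P.endsB_eA a), bot_inf_eq]
    exact P.lt_inf' (P.bot_lt_liftW_liftV _) (P.bot_lt_liftW_liftV _)
  · -- `y0 = bVert b`:  exchange for `0̄b` or for `00̄`
    obtain ⟨p, hp⟩ := hT.2 (P.liftW ⊥) (P.liftW (P.liftV x0))
    have hmin : P.liftW ⊥ < P.endMin (P.eG e0) := by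
      rw [hminG]
      exact P.lt_inf' (P.liftW_bot_lt_liftW_liftV _) (P.liftW_bot_lt_liftW_liftV _)
    rcases reach_avoid (P.eG e0) hue T p hp with h1 | h1 | h1
    · refine ⟨P.eB b, P.lexEnds_lt_of_min_lt ?_, exchange hT heT hue
        (P.endsB_eB b) h1 (Reachable.refl _ _)⟩
      rw [P.endMin_eq _ (P.endsB_eB b),
        inf_eq_left.mpr (le_of_lt (P.liftW_bot_lt_liftW_liftV _))]
      exact hmin
    · refine ⟨P.eB b, P.lexEnds_lt_of_min_lt ?_, exchange hT heT hue
        (P.endsB_eB b) h1 (Reachable.refl _ _)⟩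
      rw [P.endMin_eq _ (P.endsB_eB b),
        inf_eq_left.mpr (le_of_lt (P.liftW_bot_lt_liftW_liftV _))]
      exact hmin
    · refine ⟨P.e00, P.lexEnds_lt_of_min_lt ?_, exchange hT heT hue
        P.endsB_e00 h0 h1⟩
      rw [P.endMin_eq _ P.endsB_e00, bot_inf_eq]
      exact (bot_lt_iff_ne_bot.mpr (ne_bot_of_gt hmin))

/-- Let `G^{A,B}` be a biconed graph and `T` any spanning
tree of `G^{A,B}`.  Then every edge of `T` that does not belong to `T₀` is
internally passive in `T`. -/
theorem edge_not_in_T0_passive (P : BiconedGraph)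
    (ord : LinearOrder P.EB) (hord : P.AdmissibleOrder ord)
    (T : Finset P.EB) (hT : IsSpanningTree P.endsB T)
    (e : P.EB) (heT : e ∈ T) (he0 : e ∉ P.T0) :
    P.InternallyPassive ord T e := by
  rcases e with u | a | b | a | e0
  · exact absurd (Finset.mem_filter.mpr ⟨Finset.mem_univ _, trivial⟩) he0
  · exact absurd (Finset.mem_filter.mpr ⟨Finset.mem_univ _, trivial⟩) he0
  · exact absurd (Finset.mem_filter.mpr ⟨Finset.mem_univ _, trivial⟩) he0
  · -- `e = eS a`
    refine ⟨heT, ?_⟩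
    have hue := P.endsB_eS a
    have hminS : P.endMin (P.eS a) = P.liftW ⊥ := by
      rw [P.endMin_eq _ hue,
        inf_eq_left.mpr (le_of_lt (P.liftW_bot_lt_liftW_liftV _))]
    obtain ⟨p, hp⟩ := hT.2 (⊥ : P.W) (P.liftW ⊥)
    rcases reach_avoid (P.eS a) hue T p hp with h1 | h1 | h1
    · refine ⟨P.eA a.1, hord _ _ (P.lexEnds_lt_of_min_lt ?_),
        exchange hT heT hue (P.endsB_eA a.1) h1 (Reachable.refl _ _)⟩
      rw [hminS, P.endMin_eq _ (P.endsB_eA a.1), bot_inf_eq]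
      exact P.bot_lt_liftW_bot
    · refine ⟨P.eA a.1, hord _ _ (P.lexEnds_lt_of_min_lt ?_),
        exchange hT heT hue (P.endsB_eA a.1) h1 (Reachable.refl _ _)⟩
      rw [hminS, P.endMin_eq _ (P.endsB_eA a.1), bot_inf_eq]
      exact P.bot_lt_liftW_bot
    · have hue' : P.endsB (P.eS a)
          = s(P.liftW (P.liftV (P.aVert a.1)), P.liftW ⊥) :=
        hue.trans Sym2.eq_swap
      refine ⟨P.e00, hord _ _ (P.lexEnds_lt_of_min_lt ?_),
        exchange hT heT hue' P.endsB_e00 h1 (Reachable.refl _ _)⟩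
      rw [hminS, P.endMin_eq _ P.endsB_e00, bot_inf_eq]
      exact P.bot_lt_liftW_bot
  · -- `e = eG e0`
    refine ⟨heT, ?_⟩
    obtain ⟨x0, y0, h⟩ : ∃ x y, P.ends e0 = s(x, y) := by
      induction P.ends e0 using Sym2.ind with
      | _ x y => exact ⟨x, y, rfl⟩
    have hue : P.endsB (P.eG e0)
        = s(P.liftW (P.liftV x0), P.liftW (P.liftV y0)) := by
      show (P.ends e0).map _ = _
      rw [h, Sym2.map_pair_eq]
    obtain ⟨p, hp⟩ := hT.2 (⊥ : P.W) (P.liftW (P.liftV x0))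
    rcases reach_avoid (P.eG e0) hue T p hp with h1 | h1 | h1
    · obtain ⟨f, hflt, hfst⟩ := eG_exchange P T hT e0 heT h h1
      exact ⟨f, hord _ _ hflt, hfst⟩
    · obtain ⟨f, hflt, hfst⟩ := eG_exchange P T hT e0 heT h h1
      exact ⟨f, hord _ _ hflt, hfst⟩
    · obtain ⟨f, hflt, hfst⟩ :=
        eG_exchange P T hT e0 heT (h.trans Sym2.eq_swap) h1
      exact ⟨f, hord _ _ hflt, hfst⟩

end

end BiconedPaper
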